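/- Set T = 3π/4. The two-point boundary value problem: find differentiable y, Y : ℝ → ℝ with y′(t) = Y(t) and Y′(t) = −y(t) for all t, y(0) = 0, and Y(T) = −y(T), admits at least two distinct solutions: the pair (y, Y) = (sin, cos) is a solution, the pair (y, Y) = (0, 0) is a solution, and these two pairs are distinct. In particular, this boundary value problem does not have a unique solution. -/
import Mathlib

/-- A pair `(y, Y)` of real functions solves the two-point boundary value problem
`y' = Y`, `Y' = -y`, `y 0 = 0`, `Y T = -(y T)` with `T = 3π/4`
(the deterministic reduction of the system of Example 3.8). -/
def IsBVPSolution (y Y : ℝ → ℝ) : Prop :=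
  (∀ t : ℝ, HasDerivAt y (Y t) t) ∧
  (∀ t : ℝ, HasDerivAt Y (-(y t)) t) ∧
  y 0 = 0 ∧
  Y (3 * Real.pi / 4) = -(y (3 * Real.pi / 4))

/-- With `T = 3π/4`, both `(sin, cos)` and `(0, 0)` solve the boundary value
problem, and they are distinct; hence the problem has no unique solution. -/
theorem bvp_not_unique :
    IsBVPSolution Real.sin Real.cos ∧
    IsBVPSolution (fun _ => (0 : ℝ)) (fun _ => (0 : ℝ)) ∧
    (Real.sin, Real.cos) ≠ ((fun _ => (0 : ℝ)), (fun _ => (0 : ℝ))) := by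
  refine ⟨⟨fun t => Real.hasDerivAt_sin t, fun t => Real.hasDerivAt_cos t, Real.sin_zero, ?_⟩,
    ⟨fun t => hasDerivAt_const t 0, by simpa using fun t => hasDerivAt_const t 0,
      rfl, by simp⟩, ?_⟩
  · have h : (3 : ℝ) * Real.pi / 4 = Real.pi / 2 + Real.pi / 4 := by ring
    rw [h, Real.cos_add, Real.sin_add]; simp
  · intro h
    have := congrFun (congrArg Prod.snd h) 0
    simp at this
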